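/- Let Ω have smooth boundary, μ > 0 and λ > 0. Then for every l ∈ V* there exists a unique triplet (u, p, ν) ∈ V × Q × Z satisfying 2μ(ε(u),ε(v))_{L²} + (p, ∇·v)_{L²} + (ν, v)_{L²} = ⟨l, v⟩ for all v ∈ V, (q, ∇·u)_{L²} − λ⁻¹(p, q)_{L²} = 0 for all q ∈ Q, and (η, u)_{L²} = 0 for all η ∈ Z. Moreover the stability estimate ‖u‖₁ + ‖p‖_{L²} + ‖ν‖_{L²} ≤ C ‖l‖_{V*} holds with a constant C depending on Ω and μ but independent of λ. -/

import Mathlib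

open RealInnerProductSpace



private lemma sqle {a b : ℝ} (hb : 0 ≤ b) (h : a ^ 2 ≤ b ^ 2) : a ≤ b := by
  nlinarith [sq_nonneg (a - b), sq_nonneg (a + b)]

theorem symm_bddBelow_bijective' {X : Type*} [NormedAddCommGroup X] [InnerProductSpace ℝ X]
    [CompleteSpace X] (T : X →L[ℝ] X) (hsym : ∀ x y : X, ⟪T x, y⟫ = ⟪x, T y⟫)
    (γ : ℝ) (hγ : 0 < γ) (hlow : ∀ x : X, γ * ‖x‖ ≤ ‖T x‖) : Function.Bijective T := by
  have hinj : Function.Injective T := by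
    intro a b hab
    have h := hlow (a - b)
    rw [map_sub, hab, sub_self, norm_zero] at h
    have : ‖a - b‖ ≤ 0 := by nlinarith [norm_nonneg (a - b)]
    exact sub_eq_zero.mp (norm_le_zero_iff.mp this)
  refine ⟨hinj, ?_⟩
  have hanti : AntilipschitzWith ⟨γ⁻¹, by positivity⟩ T :=
    T.antilipschitz_of_bound (fun x => by
      change ‖x‖ ≤ γ⁻¹ * ‖T x‖
      have h := hlow x
      rw [← le_inv_mul_iff₀ (by positivity : (0:ℝ) < γ)] at h
      exact h)
  have hclosed : IsClosed (Set.range T) := hanti.isClosed_range T.uniformContinuous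
  set K : Submodule ℝ X := LinearMap.range (T : X →ₗ[ℝ] X) with hK
  have hKc : IsClosed (K : Set X) := by
    have : (K : Set X) = Set.range T := by ext x; simp [hK, LinearMap.mem_range]
    rw [this]; exact hclosed
  haveI : CompleteSpace K := hKc.completeSpace_coe
  have horth : Kᗮ = ⊥ := by
    rw [Submodule.eq_bot_iff]
    intro x hx
    have hTx : T x = 0 := by
      apply ext_inner_right ℝ
      intro y
      have := hx (T y) ⟨y, rfl⟩
      rw [inner_zero_left]
      calc ⟪T x, y⟫ = ⟪x, T y⟫ := hsym x y
        _ = 0 := by rw [real_inner_comm]; exact this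
    have h := hlow x
    rw [hTx, norm_zero] at h
    have : ‖x‖ ≤ 0 := by nlinarith [norm_nonneg x]
    exact norm_le_zero_iff.mp this
  have htop : K = ⊤ := Submodule.orthogonal_eq_bot_iff.mp horth
  intro y
  have : y ∈ K := htop ▸ Submodule.mem_top
  exact this


private lemma final_chase2 {mu K1 K2 Gam D N s : ℝ}
    (hmu : 0 < mu) (hK2 : 0 < K2) (hK10 : 0 ≤ K1)
    (hGamdef : Gam = 4 / 3 * (K2 ^ 2 / (2 * mu) + K1))
    (hN0 : 0 ≤ N) (hD0 : 0 ≤ D) (hs0 : 0 ≤ s)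
    (key : N ≤ K2 * s + K1 * D)
    (step1 : 2 * mu * s ^ 2 ≤ D * N) : N ≤ Gam * D := by
  have h6 : N ^ 2 ≤ K2 * s * N + K1 * D * N := by nlinarith
  have h7 : K2 * s * N ≤ K2 ^ 2 * s ^ 2 + N ^ 2 / 4 := by
    nlinarith [sq_nonneg (K2 * s - N / 2)]
  have h8 : K2 ^ 2 * s ^ 2 ≤ K2 ^ 2 * (D * N) / (2 * mu) := by
    have hdn : s ^ 2 ≤ D * N / (2 * mu) := by
      rw [le_div_iff₀ (by positivity : (0:ℝ) < 2 * mu)]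
      nlinarith
    have h := mul_le_mul_of_nonneg_left hdn (sq_nonneg K2)
    calc K2 ^ 2 * s ^ 2 ≤ K2 ^ 2 * (D * N / (2 * mu)) := h
      _ = K2 ^ 2 * (D * N) / (2 * mu) := by ring
  have h9 : (3 / 4 : ℝ) * N ^ 2 ≤ (K2 ^ 2 / (2 * mu) + K1) * (D * N) := by
    have expand : (K2 ^ 2 / (2 * mu) + K1) * (D * N)
        = K2 ^ 2 * (D * N) / (2 * mu) + K1 * (D * N) := by ring
    rw [expand]
    linarith
  rcases eq_or_lt_of_le hN0 with h0 | h0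
  · rw [← h0, hGamdef]; positivity
  · have h10 : (3 / 4 : ℝ) * N * N ≤ ((K2 ^ 2 / (2 * mu) + K1) * D) * N := by
      nlinarith
    have h11 := le_of_mul_le_mul_right h10 h0
    rw [hGamdef]
    nlinarith

private lemma final_chase {mu beta c0 r K1 K2 Gam D N s nu np nJ nnu : ℝ}
    (hmu : 0 < mu) (hbeta : 0 < beta) (hc0 : 0 < c0) (hr : 0 < r)
    (hK1def : K1 = c0 ^ 2 + (1 + c0) / beta)
    (hK2def : K2 = r⁻¹ + 2 * mu * (1 + c0) / beta)
    (hGamdef : Gam = 4 / 3 * (K2 ^ 2 / (2 * mu) + K1))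
    (hN0 : 0 ≤ N) (hD0 : 0 ≤ D) (hs0 : 0 ≤ s)
    (hnu0 : 0 ≤ nu) (hnp0 : 0 ≤ np) (hnJ0 : 0 ≤ nJ) (hnnu0 : 0 ≤ nnu)
    (hNle : N ≤ nu + np + nnu)
    (huD : nu ≤ r⁻¹ * s + c0 ^ 2 * D)
    (hpb : beta * np ≤ D + 2 * mu * s)
    (hnb : beta * nJ ≤ D + 2 * mu * s)
    (hnu2 : nnu ≤ c0 * nJ)
    (step1 : 2 * mu * s ^ 2 ≤ D * N) :
    Gam⁻¹ * N ≤ D := by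
  have hK1 : 0 < K1 := by rw [hK1def]; positivity
  have hK2 : 0 < K2 := by rw [hK2def]; positivity
  have hGam : 0 < Gam := by rw [hGamdef]; positivity
  rw [inv_mul_le_iff₀ hGam]
  have key : N ≤ K2 * s + K1 * D := by
    have hnp' : np ≤ (D + 2 * mu * s) / beta := by
      rw [le_div_iff₀ hbeta]; nlinarith
    have hnJ' : nJ ≤ (D + 2 * mu * s) / beta := by
      rw [le_div_iff₀ hbeta]; nlinarith
    have hnnu' : nnu ≤ c0 * ((D + 2 * mu * s) / beta) :=
      le_trans hnu2 (mul_le_mul_of_nonneg_left hnJ' hc0.le)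
    have final_eq : r⁻¹ * s + c0 ^ 2 * D + (D + 2 * mu * s) / beta
        + c0 * ((D + 2 * mu * s) / beta) = K2 * s + K1 * D := by
      rw [hK1def, hK2def]; field_simp; ring
    linarith
  exact final_chase2 hmu hK2 hK1.le hGamdef hN0 hD0 hs0 key step1

private lemma beta_mul_le {beta a b c : ℝ} (h5 : beta * c ≤ b) (hle : a ≤ c)
    (hbeta : 0 < beta) : beta * a ≤ b := by nlinarith

private lemma norm_triple_le {a b c N : ℝ} (ha : 0 ≤ a) (hb : 0 ≤ b) (hc : 0 ≤ c)
    (hN : 0 ≤ N) (h : a ^ 2 + b ^ 2 + c ^ 2 = N ^ 2) : N ≤ a + b + c := by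
  nlinarith [mul_nonneg ha hb, mul_nonneg ha hc, mul_nonneg hb hc]

private lemma triple_le_sqrt3 {a b c N : ℝ} (ha : 0 ≤ a) (hb : 0 ≤ b) (hc : 0 ≤ c)
    (hN : 0 ≤ N) (h : a ^ 2 + b ^ 2 + c ^ 2 = N ^ 2) :
    a + b + c ≤ Real.sqrt 3 * N := by
  have h3 : (Real.sqrt 3) ^ 2 = 3 := Real.sq_sqrt (by norm_num)
  refine sqle (by positivity) ?_
  rw [mul_pow, h3]
  nlinarith [sq_nonneg (a - b), sq_nonneg (a - c), sq_nonneg (b - c)]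

set_option maxHeartbeats 2000000 in
/-- λ-robust well-posedness of the three-field mixed formulation.

Abstract Hilbert-space formalization: `V ≅ [H¹(Ω)]³` with the norm `‖·‖₁`
(`‖v‖₁² = ‖Jv‖² + ‖grad v‖²`), `J : V → HL ≅ [L²(Ω)]³` the (injective) embedding,
`QL ≅ Q = L²(Ω)`, `eps` the symmetric gradient, `dv` the divergence,
`Z = ker ε` the six-dimensional space of rigid motions.  On a smooth bounded domain:
Korn's second inequality holds on `Z⊥` (constant `CK`), `‖z‖₁ ≤ C₀‖z‖_{L²}` on `Z`,
and the inf-sup condition for `b(v,(p,η)) = (p,∇·v)_{L²} + (v,η)_{L²}` holds with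
constant `β > 0` (Lemma on smooth domains; hypothesis `hinfsup`).

Conclusion: for `μ > 0` there is a stability constant `C > 0`, independent of `λ`,
such that for every `λ > 0` and every `l ∈ V*` there is a unique triplet
`(u,p,ν) ∈ V × Q × Z` with
`2μ(ε(u),ε(v)) + (p,∇·v) + (ν,v) = ⟨l,v⟩ ∀ v ∈ V`,
`(q,∇·u) − λ⁻¹(p,q) = 0 ∀ q ∈ Q`, `(η,u) = 0 ∀ η ∈ Z`, and moreover
`‖u‖₁ + ‖p‖_{L²} + ‖ν‖_{L²} ≤ C‖l‖_{V*}`. -/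
theorem three_field_mixed_formulation_lambda_robust
    {V HL SL QL WL : Type}
    [NormedAddCommGroup V] [InnerProductSpace ℝ V] [CompleteSpace V]
    [NormedAddCommGroup HL] [InnerProductSpace ℝ HL]
    [NormedAddCommGroup SL] [InnerProductSpace ℝ SL]
    [NormedAddCommGroup QL] [InnerProductSpace ℝ QL] [CompleteSpace QL]
    [NormedAddCommGroup WL] [InnerProductSpace ℝ WL]
    (J : V →L[ℝ] HL) (eps : V →L[ℝ] SL) (dv : V →L[ℝ] QL) (grad : V →L[ℝ] WL)
    (hJ : Function.Injective J)
    (hnorm : ∀ v : V, ‖v‖ ^ 2 = ‖J v‖ ^ 2 + ‖grad v‖ ^ 2)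
    (heps : ∀ v : V, ‖eps v‖ ≤ ‖grad v‖)
    (hdvg : ∀ v : V, ‖dv v‖ ≤ Real.sqrt 3 * ‖grad v‖)
    (hdve : ∀ v : V, ‖dv v‖ ≤ Real.sqrt 3 * ‖eps v‖)
    (Z : Submodule ℝ V) (hZ : ∀ v : V, v ∈ Z ↔ eps v = 0)
    (hZdim : Module.finrank ℝ Z = 6)
    (CK : ℝ) (hCK : 0 < CK)
    (hKorn : ∀ u : V, (∀ z ∈ Z, ⟪J u, J z⟫ = 0) → CK * ‖u‖ ^ 2 ≤ ‖eps u‖ ^ 2)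
    (C₀ : ℝ) (hC₀ : 0 < C₀)
    (hrig : ∀ z ∈ Z, ‖z‖ ≤ C₀ * ‖J z‖)
    (β : ℝ) (hβ : 0 < β)
    (hinfsup : ∀ (p : QL), ∀ η ∈ Z, ∃ v : V, v ≠ 0 ∧
        β * Real.sqrt (‖p‖ ^ 2 + ‖J η‖ ^ 2) * ‖v‖ ≤ ⟪p, dv v⟫ + ⟪J v, J η⟫)
    (μ : ℝ) (hμ : 0 < μ) :
    ∃ C > (0 : ℝ), ∀ lam : ℝ, 0 < lam → ∀ l : V →L[ℝ] ℝ,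
      -- existence and uniqueness of the triplet (u, p, ν)
      (∃! upν : V × QL × Z,
          (∀ v : V, 2 * μ * ⟪eps upν.1, eps v⟫ + ⟪upν.2.1, dv v⟫
              + ⟪J (upν.2.2 : V), J v⟫ = l v)
          ∧ (∀ q : QL, ⟪q, dv upν.1⟫ - lam⁻¹ * ⟪upν.2.1, q⟫ = 0)
          ∧ (∀ η ∈ Z, ⟪J η, J upν.1⟫ = 0))
      -- λ-independent stability
      ∧ (∀ (u : V) (p : QL) (ν : V), ν ∈ Z →
          ((∀ v : V, 2 * μ * ⟪eps u, eps v⟫ + ⟪p, dv v⟫ + ⟪J ν, J v⟫ = l v)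
            ∧ (∀ q : QL, ⟪q, dv u⟫ - lam⁻¹ * ⟪p, q⟫ = 0)
            ∧ (∀ η ∈ Z, ⟪J η, J u⟫ = 0)) →
          ‖u‖ + ‖p‖ + ‖J ν‖ ≤ C * ‖l‖) := by
  -- preliminaries
  haveI : FiniteDimensional ℝ Z := Module.finite_of_finrank_pos (by rw [hZdim]; norm_num)
  -- norms of components
  have hJle : ∀ v : V, ‖J v‖ ≤ ‖v‖ := fun v =>
    sqle (norm_nonneg _) (by nlinarith [hnorm v, sq_nonneg ‖grad v‖])
  have hepsle : ∀ v : V, ‖eps v‖ ≤ ‖v‖ := fun v => le_trans (heps v)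
    (sqle (norm_nonneg _) (by nlinarith [hnorm v, sq_nonneg ‖J v‖]))
  -- the product Hilbert space
  set Y := WithLp 2 (QL × Z) with hY
  set X := WithLp 2 (V × Y) with hX
  let emb : V → QL → Z → X := fun u p ν =>
    (WithLp.equiv 2 (V × Y)).symm (u, (WithLp.equiv 2 (QL × Z)).symm (p, ν))
  have hembn : ∀ (u : V) (p : QL) (ν : Z),
      ‖emb u p ν‖ ^ 2 = ‖u‖ ^ 2 + ‖p‖ ^ 2 + ‖(ν : V)‖ ^ 2 := by
    intro u p ν
    rw [WithLp.prod_norm_sq_eq_of_L2, WithLp.prod_norm_sq_eq_of_L2]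
    ring_nf
    rfl
  have hfst : ∀ (u : V) (p : QL) (ν : Z), (emb u p ν).fst = u := fun _ _ _ => rfl
  have hsndf : ∀ (u : V) (p : QL) (ν : Z), (emb u p ν).snd.fst = p := fun _ _ _ => rfl
  have hsnds : ∀ (u : V) (p : QL) (ν : Z), (emb u p ν).snd.snd = ν := fun _ _ _ => rfl
  -- projections
  let eV : X →L[ℝ] V := (ContinuousLinearMap.fst ℝ V Y).comp
    (WithLp.prodContinuousLinearEquiv 2 ℝ V Y : X →L[ℝ] V × Y)
  let eY : X →L[ℝ] Y := (ContinuousLinearMap.snd ℝ V Y).comp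
    (WithLp.prodContinuousLinearEquiv 2 ℝ V Y : X →L[ℝ] V × Y)
  let eQ : X →L[ℝ] QL := (ContinuousLinearMap.fst ℝ QL Z).comp
    (((WithLp.prodContinuousLinearEquiv 2 ℝ QL Z) : Y →L[ℝ] QL × Z).comp eY)
  let eN : X →L[ℝ] V := (Z.subtypeL).comp ((ContinuousLinearMap.snd ℝ QL Z).comp
    (((WithLp.prodContinuousLinearEquiv 2 ℝ QL Z) : Y →L[ℝ] QL × Z).comp eY))
  have heV : ∀ x : X, eV x = x.fst := fun _ => rfl
  have heQ : ∀ x : X, eQ x = x.snd.fst := fun _ => rfl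
  have heN : ∀ x : X, eN x = (x.snd.snd : V) := fun _ => rfl
  have heVle : ∀ x : X, ‖eV x‖ ≤ ‖x‖ := by
    intro x
    refine sqle (norm_nonneg _) ?_
    rw [heV, WithLp.prod_norm_sq_eq_of_L2]
    nlinarith [sq_nonneg ‖x.snd‖]
  -- constants
  set r : ℝ := Real.sqrt CK with hrdef
  have hr : 0 < r := Real.sqrt_pos.mpr hCK
  have hr2 : r ^ 2 = CK := Real.sq_sqrt hCK.le
  set K1 : ℝ := C₀ ^ 2 + (1 + C₀) / β with hK1def
  set K2 : ℝ := r⁻¹ + 2 * μ * (1 + C₀) / β with hK2def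
  have hK1 : 0 < K1 := by positivity
  have hK2 : 0 < K2 := by positivity
  set Γ : ℝ := (4 / 3) * (K2 ^ 2 / (2 * μ) + K1) with hΓdef
  have hΓ : 0 < Γ := by positivity
  refine ⟨Real.sqrt 3 * Γ, by positivity, ?_⟩
  intro lam hlam l
  -- real-bilinear inner products
  let iS : SL →L[ℝ] SL →L[ℝ] ℝ := innerSL ℝ
  let iQ : QL →L[ℝ] QL →L[ℝ] ℝ := innerSL ℝ
  let iH : HL →L[ℝ] HL →L[ℝ] ℝ := innerSL ℝ
  -- the combined bilinear form
  let A : X →L[ℝ] X →L[ℝ] ℝ :=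
    (2 * μ) • iS.bilinearComp (eps.comp eV) (eps.comp eV)
    + iQ.bilinearComp eQ (dv.comp eV)
    + iH.bilinearComp (J.comp eN) (J.comp eV)
    + (iQ.bilinearComp eQ (dv.comp eV)).flip
    + (iH.bilinearComp (J.comp eN) (J.comp eV)).flip
    - lam⁻¹ • iQ.bilinearComp eQ eQ
  have hA : ∀ x y : X, A x y
      = 2 * μ * ⟪eps x.fst, eps y.fst⟫ + ⟪x.snd.fst, dv y.fst⟫
        + ⟪J (x.snd.snd : V), J y.fst⟫ + ⟪y.snd.fst, dv x.fst⟫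
        + ⟪J (y.snd.snd : V), J x.fst⟫ - lam⁻¹ * ⟪x.snd.fst, y.snd.fst⟫ := by
    intro x y
    rfl
  -- the operator associated with A via Riesz representation
  let T : X →L[ℝ] X :=
    ((InnerProductSpace.toDual ℝ X).symm.toLinearIsometry.toContinuousLinearMap :
        StrongDual ℝ X →L[ℝ] X).comp A
  have hT : ∀ x y : X, ⟪T x, y⟫ = A x y := by
    intro x y
    rw [show T x = (InnerProductSpace.toDual ℝ X).symm (A x) from rfl]
    exact InnerProductSpace.toDual_symm_apply
  have hAsymm : ∀ x y : X, A x y = A y x := by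
    intro x y
    rw [hA, hA, real_inner_comm (eps x.fst) (eps y.fst),
      real_inner_comm x.snd.fst y.snd.fst]
    ring
  have hTsymm : ∀ x y : X, ⟪T x, y⟫ = ⟪x, T y⟫ := by
    intro x y
    rw [hT, hAsymm, ← hT, real_inner_comm]
  clear_value T A
  -- norm-equality helper for embedded triples
  have hne : ∀ (a : V) (b : QL) (c : Z) (t : ℝ), 0 ≤ t →
      ‖a‖ ^ 2 + ‖b‖ ^ 2 + ‖(c : V)‖ ^ 2 = t ^ 2 → ‖emb a b c‖ = t := by
    intro a b c t ht hsq
    have h := hembn a b c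
    rw [hsq] at h
    exact le_antisymm (sqle ht h.le) (sqle (norm_nonneg _) h.ge)
  -- the λ-uniform lower bound
  have hlow : ∀ x : X, Γ⁻¹ * ‖x‖ ≤ ‖T x‖ := by
    intro x
    set u : V := x.fst with hu
    set p : QL := x.snd.fst with hp
    set ν : Z := x.snd.snd with hν
    set D : ℝ := ‖T x‖ with hD
    have hD0 : 0 ≤ D := norm_nonneg _
    set N : ℝ := ‖x‖ with hN
    have hN0 : 0 ≤ N := norm_nonneg _
    have hNsq : ‖u‖ ^ 2 + ‖p‖ ^ 2 + ‖(ν : V)‖ ^ 2 = N ^ 2 := (hembn u p ν).symm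
    have hAD : ∀ y : X, A x y ≤ D * ‖y‖ := by
      intro y
      rw [← hT]
      exact real_inner_le_norm _ _
    set s : ℝ := ‖eps u‖ with hs
    have hs0 : 0 ≤ s := norm_nonneg _
    clear_value u p ν D N s
    -- step 1 : energy bound
    have step1 : 2 * μ * s ^ 2 ≤ D * N := by
      have h1 := hAD (emb u (-p) (-ν))
      rw [hA, hfst, hsndf, hsnds,
        hne u (-p) (-ν) N hN0 (by rw [← hNsq]; simp), ← hu, ← hp, ← hν] at h1
      simp only [inner_neg_left, inner_neg_right, NegMemClass.coe_neg, map_neg] at h1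
      have e1 : (⟪eps u, eps u⟫ : ℝ) = s ^ 2 := by
        rw [hs]; exact real_inner_self_eq_norm_sq _
      have e2 : (0:ℝ) ≤ ⟪p, p⟫ := real_inner_self_nonneg
      have hli : (0:ℝ) ≤ lam⁻¹ := by positivity
      nlinarith [h1]
    -- step 2 : the J-orthogonal projection of u onto Z
    haveI : FiniteDimensional ℝ (Z.map (J : V →ₗ[ℝ] HL)) := Module.Finite.map Z _
    obtain ⟨z, hzZ, hJz⟩ := Submodule.mem_map.mp
      (Submodule.orthogonalProjection (Z.map (J : V →ₗ[ℝ] HL)) (J u)).2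
    have hJz' : J z = (Submodule.orthogonalProjection (Z.map (J : V →ₗ[ℝ] HL)) (J u) : HL) := hJz
    have horthM : ∀ z' ∈ Z, ⟪J u - J z, J z'⟫ = 0 := by
      intro z' hz'
      rw [hJz']
      exact Submodule.starProjection_inner_eq_zero (J u) (J z')
        (Submodule.mem_map.mpr ⟨z', hz', rfl⟩)
    have hepsz : eps z = 0 := (hZ z).mp hzZ
    have hu0 : CK * ‖u - z‖ ^ 2 ≤ s ^ 2 := by
      have h := hKorn (u - z) (fun z' hz' => by
        rw [map_sub]; exact horthM z' hz')
      rw [map_sub, hepsz, sub_zero] at h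
      rw [hs]; exact h
    have hJzJu : ⟪J z, J u⟫ = ‖J z‖ ^ 2 := by
      have h := horthM z hzZ
      rw [inner_sub_left] at h
      rw [real_inner_comm]
      nlinarith [real_inner_self_eq_norm_sq (J z)]
    have hJzD : ‖J z‖ ≤ C₀ * D := by
      have h2 := hAD (emb 0 0 ⟨z, hzZ⟩)
      rw [hA, hfst, hsndf, hsnds,
        hne 0 0 ⟨z, hzZ⟩ ‖z‖ (norm_nonneg z) (by simp), ← hu, ← hp, ← hν] at h2
      simp only [map_zero, inner_zero_left, inner_zero_right, mul_zero, add_zero,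
        zero_add, sub_zero, zero_sub] at h2
      have h2' : ‖J z‖ ^ 2 ≤ D * ‖z‖ := by
        rw [← hJzJu]
        convert h2 using 2
      have h3 : ‖J z‖ * ‖J z‖ ≤ (C₀ * D) * ‖J z‖ := by
        nlinarith [hrig z hzZ, norm_nonneg (J z), hD0]
      rcases eq_or_lt_of_le (norm_nonneg (J z)) with h0 | h0
      · rw [← h0]; positivity
      · exact le_of_mul_le_mul_right h3 h0
    have hzD : ‖z‖ ≤ C₀ ^ 2 * D := by
      calc ‖z‖ ≤ C₀ * ‖J z‖ := hrig z hzZ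
        _ ≤ C₀ * (C₀ * D) := by nlinarith [hJzD]
        _ = C₀ ^ 2 * D := by ring
    have huD : ‖u‖ ≤ r⁻¹ * s + C₀ ^ 2 * D := by
      have h3 : r * ‖u - z‖ ≤ s := by
        refine sqle hs0 ?_
        rw [mul_pow, hr2]
        exact hu0
      have h4 : ‖u - z‖ ≤ r⁻¹ * s := by
        rw [← le_inv_mul_iff₀ hr] at h3
        exact h3
      calc ‖u‖ = ‖(u - z) + z‖ := by rw [sub_add_cancel]
        _ ≤ ‖u - z‖ + ‖z‖ := norm_add_le _ _
        _ ≤ r⁻¹ * s + C₀ ^ 2 * D := add_le_add h4 hzD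
    -- step 3 : inf-sup bound for (p, ν)
    obtain ⟨w, hw0, hwb⟩ := hinfsup p (ν : V) ν.2
    have hww : 0 < ‖w‖ := norm_pos_iff.mpr hw0
    have h4 := hAD (emb w 0 0)
    rw [hA, hfst, hsndf, hsnds,
      hne w 0 0 ‖w‖ (norm_nonneg w) (by simp), ← hu, ← hp, ← hν] at h4
    simp only [map_zero, inner_zero_left, inner_zero_right, mul_zero, add_zero,
      sub_zero, ZeroMemClass.coe_zero] at h4
    have hcs : -(2 * μ * (s * ‖w‖)) ≤ 2 * μ * ⟪eps u, eps w⟫ := by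
      have h := abs_real_inner_le_norm (eps u) (eps w)
      rw [← hs] at h
      have h' := hepsle w
      have h'' := neg_abs_le (⟪eps u, eps w⟫ : ℝ)
      have h3 : s * ‖eps w‖ ≤ s * ‖w‖ := mul_le_mul_of_nonneg_left h' hs0
      have h4' : -(s * ‖w‖) ≤ ⟪eps u, eps w⟫ := by linarith
      have h5' := mul_le_mul_of_nonneg_left h4' (by positivity : (0:ℝ) ≤ 2 * μ)
      calc -(2 * μ * (s * ‖w‖)) = 2 * μ * -(s * ‖w‖) := by ring
        _ ≤ 2 * μ * ⟪eps u, eps w⟫ := h5'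
    have hcomm : (⟪J w, J (ν : V)⟫ : ℝ) = ⟪J (ν : V), J w⟫ := real_inner_comm _ _
    have h5 : β * Real.sqrt (‖p‖ ^ 2 + ‖J (ν : V)‖ ^ 2) ≤ D + 2 * μ * s := by
      have hineq : β * Real.sqrt (‖p‖ ^ 2 + ‖J (ν : V)‖ ^ 2) * ‖w‖
          ≤ (D + 2 * μ * s) * ‖w‖ := by
        linarith [hwb, h4, hcs, hcomm]
      exact le_of_mul_le_mul_right hineq hww
    have hsqrtp : ‖p‖ ≤ Real.sqrt (‖p‖ ^ 2 + ‖J (ν : V)‖ ^ 2) := by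
      refine sqle (Real.sqrt_nonneg _) ?_
      rw [Real.sq_sqrt (by positivity)]
      nlinarith [sq_nonneg ‖J (ν : V)‖]
    have hsqrtn : ‖J (ν : V)‖ ≤ Real.sqrt (‖p‖ ^ 2 + ‖J (ν : V)‖ ^ 2) := by
      refine sqle (Real.sqrt_nonneg _) ?_
      rw [Real.sq_sqrt (by positivity)]
      nlinarith [sq_nonneg ‖p‖]
    have hsqrt0 : 0 ≤ Real.sqrt (‖p‖ ^ 2 + ‖J (ν : V)‖ ^ 2) := Real.sqrt_nonneg _
    have hpb : β * ‖p‖ ≤ D + 2 * μ * s := beta_mul_le h5 hsqrtp hβ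
    have hnb : β * ‖J (ν : V)‖ ≤ D + 2 * μ * s := beta_mul_le h5 hsqrtn hβ
    have hν2 : ‖(ν : V)‖ ≤ C₀ * ‖J (ν : V)‖ := hrig _ ν.2
    have hNle : N ≤ ‖u‖ + ‖p‖ + ‖(ν : V)‖ :=
      norm_triple_le (norm_nonneg u) (norm_nonneg p) (norm_nonneg ((ν : V))) hN0 hNsq
    exact final_chase hμ hβ hC₀ hr hK1def hK2def hΓdef hN0 hD0 hs0
      (norm_nonneg u) (norm_nonneg p) (norm_nonneg (J (ν : V))) (norm_nonneg ((ν : V)))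
      hNle huD hpb hnb hν2 step1
  -- solvability of the operator equation
  have hbij := symm_bddBelow_bijective' T hTsymm Γ⁻¹ (by positivity) hlow
  let L : X →L[ℝ] ℝ := l.comp eV
  let F : X := (InnerProductSpace.toDual ℝ X).symm L
  have hF : ∀ y : X, ⟪F, y⟫ = l (eV y) := fun y =>
    InnerProductSpace.toDual_symm_apply
  have hFnorm : ‖F‖ ≤ ‖l‖ := by
    rw [show ‖F‖ = ‖L‖ from (InnerProductSpace.toDual ℝ X).symm.norm_map L]
    refine ContinuousLinearMap.opNorm_le_bound _ (norm_nonneg l) (fun y => ?_)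
    calc ‖L y‖ = ‖l (eV y)‖ := rfl
      _ ≤ ‖l‖ * ‖eV y‖ := l.le_opNorm _
      _ ≤ ‖l‖ * ‖y‖ := mul_le_mul_of_nonneg_left (heVle y) (norm_nonneg l)
  -- characterization of the equations via the operator equation
  have hchar : ∀ (t : V × QL × Z),
      ((∀ v : V, 2 * μ * ⟪eps t.1, eps v⟫ + ⟪t.2.1, dv v⟫
          + ⟪J (t.2.2 : V), J v⟫ = l v)
        ∧ (∀ q : QL, ⟪q, dv t.1⟫ - lam⁻¹ * ⟪t.2.1, q⟫ = 0)
        ∧ (∀ η ∈ Z, ⟪J η, J t.1⟫ = 0)) ↔ T (emb t.1 t.2.1 t.2.2) = F := by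
    rintro ⟨tu, tp, tν⟩
    constructor
    · rintro ⟨e1, e2, e3⟩
      apply ext_inner_right ℝ
      intro y
      rw [hT, hF, hA, hfst, hsndf, hsnds, heV]
      have h1 := e1 y.fst
      have h2 := e2 y.snd.fst
      have h3 := e3 (y.snd.snd : V) y.snd.snd.2
      linarith [h1, h2, h3]
    · intro ht
      have key : ∀ y : X, A (emb tu tp tν) y = l (eV y) := by
        intro y
        rw [← hT, ht, hF]
      refine ⟨?_, ?_, ?_⟩
      · intro v
        have h1 := key (emb v 0 0)
        rw [hA, hfst, hsndf, hsnds, hfst, hsndf, hsnds, heV, hfst] at h1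
        simp only [map_zero, inner_zero_left, inner_zero_right, mul_zero,
          add_zero, sub_zero, ZeroMemClass.coe_zero] at h1
        linarith [h1]
      · intro q
        have h1 := key (emb 0 q 0)
        rw [hA, hfst, hsndf, hsnds, hfst, hsndf, hsnds, heV, hfst] at h1
        simp only [map_zero, inner_zero_left, inner_zero_right, mul_zero,
          add_zero, zero_add, sub_zero, ZeroMemClass.coe_zero] at h1
        linarith [h1]
      · intro η hη
        have h1 := key (emb 0 0 ⟨η, hη⟩)
        rw [hA, hfst, hsndf, hsnds, hfst, hsndf, hsnds, heV, hfst] at h1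
        simp only [map_zero, inner_zero_left, inner_zero_right, mul_zero,
          add_zero, zero_add, sub_zero, ZeroMemClass.coe_zero] at h1
        linarith [h1]
  obtain ⟨x0, hx0⟩ := hbij.2 F
  have hx0' : T (emb x0.fst x0.snd.fst x0.snd.snd) = F := hx0
  constructor
  · -- existence and uniqueness
    refine ⟨(x0.fst, x0.snd.fst, x0.snd.snd), (hchar _).mpr hx0', ?_⟩
    rintro ⟨a, b, c⟩ hP
    have h1 := (hchar (a, b, c)).mp hP
    have h2 : emb a b c = emb x0.fst x0.snd.fst x0.snd.snd :=
      hbij.1 (h1.trans hx0'.symm)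
    exact Prod.ext (congrArg (fun w => w.fst) h2)
      (Prod.ext (congrArg (fun w => w.snd.fst) h2) (congrArg (fun w => w.snd.snd) h2))
  · -- stability
    intro u p ν hν hP
    have ht : T (emb u p ⟨ν, hν⟩) = F := (hchar (u, p, ⟨ν, hν⟩)).mp hP
    have hxb : Γ⁻¹ * ‖emb u p ⟨ν, hν⟩‖ ≤ ‖l‖ := by
      calc Γ⁻¹ * ‖emb u p ⟨ν, hν⟩‖ ≤ ‖T (emb u p ⟨ν, hν⟩)‖ := hlow _
        _ = ‖F‖ := by rw [ht]
        _ ≤ ‖l‖ := hFnorm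
    have hxn : ‖emb u p ⟨ν, hν⟩‖ ≤ Γ * ‖l‖ := by
      rwa [inv_mul_le_iff₀ hΓ] at hxb
    have htriple : ‖u‖ + ‖p‖ + ‖ν‖ ≤ Real.sqrt 3 * ‖emb u p ⟨ν, hν⟩‖ :=
      triple_le_sqrt3 (norm_nonneg u) (norm_nonneg p) (norm_nonneg ν)
        (norm_nonneg _) (hembn u p ⟨ν, hν⟩).symm
    have hJν : ‖J ν‖ ≤ ‖ν‖ := hJle ν
    calc ‖u‖ + ‖p‖ + ‖J ν‖ ≤ ‖u‖ + ‖p‖ + ‖ν‖ := by linarith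
      _ ≤ Real.sqrt 3 * ‖emb u p ⟨ν, hν⟩‖ := htriple
      _ ≤ Real.sqrt 3 * (Γ * ‖l‖) :=
          mul_le_mul_of_nonneg_left hxn (Real.sqrt_nonneg 3)
      _ = Real.sqrt 3 * Γ * ‖l‖ := by ring
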